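/- arXiv:2601.20612 — 2 statements merged into one kernel-verified Lean document; each statement's English description precedes it below -/
import Mathlib

section
/- Let g(z) := min{ψ(t)z + 2c_W(t) : 0 ≤ t ≤ 1}. Then g(z) ≤ z for all z ∈ [0,∞), and lim_{z→0⁺} g(z)/z = 1. -/
open MeasureTheory Metric Filter Set Topology
open scoped ENNReal NNReal RealInnerProductSpace

noncomputable section

/-- `n`-dimensional Euclidean space. -/
abbrev Euc (n : ℕ) := EuclideanSpace ℝ (Fin n)

variable {n : ℕ}

/-- The set `A` has Lebesgue density `0` at the point `x`. -/
def DensityZeroAt (A : Set (Euc n)) (x : Euc n) : Prop :=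
  Tendsto (fun r : ℝ => volume (A ∩ ball x r) / volume (ball x r)) (𝓝[>] 0) (𝓝 0)

/-- The set `A` has Lebesgue density `1` at the point `x`. -/
def DensityOneAt (A : Set (Euc n)) (x : Euc n) : Prop :=
  Tendsto (fun r : ℝ => volume (A ∩ ball x r) / volume (ball x r)) (𝓝[>] 0) (𝓝 1)

/-- The essential (measure-theoretic) boundary of `A`; for a set of finite perimeter it
agrees with the reduced boundary `∂*A` up to an `H^{n-1}`-negligible set (Federer). -/
def essBoundary (A : Set (Euc n)) : Set (Euc n) :=
  {x | ¬ DensityOneAt A x ∧ ¬ DensityZeroAt A x}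

section Vec

variable {F : Type*} [NormedAddCommGroup F] [InnerProductSpace ℝ F]

/-- `x` is an approximate jump point of `u`, with one-sided approximate limits `a, b`
and normal direction `ν`. -/
def ApproxJumpAt (u : Euc n → F) (x : Euc n) (a b : F) (ν : Euc n) : Prop :=
  ‖ν‖ = 1 ∧ a ≠ b ∧
  (∀ ε > 0, DensityZeroAt {y | 0 < ⟪y - x, ν⟫ ∧ ε ≤ ‖u y - a‖} x) ∧
  (∀ ε > 0, DensityZeroAt {y | ⟪y - x, ν⟫ < 0 ∧ ε ≤ ‖u y - b‖} x)

/-- The approximate jump set `S_u`. -/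
def jumpSet (u : Euc n → F) : Set (Euc n) := {x | ∃ a b ν, ApproxJumpAt u x a b ν}

open Classical in
/-- The pair of one-sided traces `(u⁺(x), u⁻(x))` at a jump point (an arbitrary value
elsewhere); it is unique up to a swap, at every jump point. -/
def jumpVals (u : Euc n → F) (x : Euc n) : F × F :=
  if h : ∃ p : F × F, ∃ ν, ApproxJumpAt u x p.1 p.2 ν then h.choose else 0

/-- The jump opening `|u⁺(x) − u⁻(x)|` (well defined on `S_u`). -/
def jumpGap (u : Euc n → F) (x : Euc n) : ℝ :=
  ‖(jumpVals u x).1 - (jumpVals u x).2‖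

/-- `S^σ_u := {x ∈ S_u : |u⁺(x) − u⁻(x)| ≥ σ}`. -/
def jumpSetGE (σ : ℝ) (u : Euc n → F) : Set (Euc n) :=
  {x ∈ jumpSet u | σ ≤ jumpGap u x}

/-- `u` is approximately differentiable at `x` with approximate differential `L`. -/
def HasApproxDerivAt (u : Euc n → F) (L : Euc n →L[ℝ] F) (x : Euc n) : Prop :=
  ∀ ε > 0, DensityZeroAt {y | ε * ‖y - x‖ ≤ ‖u y - u x - L (y - x)‖} x

open Classical in
/-- The approximate differential `∇u(x)` (zero if it does not exist). -/
def approxDeriv (u : Euc n → F) (x : Euc n) : Euc n →L[ℝ] F :=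
  if h : ∃ L, HasApproxDerivAt u L x then h.choose else 0

/-- Frobenius (Euclidean) norm of a linear map `Euc n → F`. -/
def frobNorm (L : Euc n →L[ℝ] F) : ℝ :=
  Real.sqrt (∑ j, ‖L (EuclideanSpace.single j (1 : ℝ))‖ ^ 2)

/-- `|∇u|(x)`, the Euclidean norm of the approximate gradient. -/
def agradNorm (u : Euc n → F) (x : Euc n) : ℝ := frobNorm (approxDeriv u x)

/-- Admissible vector field for the sup-definition of the total variation on `Ω`. -/
def IsVarTest (Ω : Set (Euc n)) (Φ : Fin n → Euc n → F) : Prop :=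
  (∀ j, ContDiff ℝ (⊤ : ℕ∞) (Φ j) ∧ HasCompactSupport (Φ j) ∧ tsupport (Φ j) ⊆ Ω) ∧
  ∀ x, (∑ j, ‖Φ j x‖ ^ 2) ≤ 1

/-- The total variation `|Du|(Ω)` of `u` on the open set `Ω`. -/
def var (Ω : Set (Euc n)) (u : Euc n → F) : ℝ≥0∞ :=
  ⨆ (Φ : Fin n → Euc n → F) (_ : IsVarTest Ω Φ),
    ENNReal.ofReal
      (∫ x in Ω, ∑ j, ⟪u x, fderiv ℝ (Φ j) x (EuclideanSpace.single j (1 : ℝ))⟫)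

/-- `u ∈ BV(Ω; F)`. -/
def BVOn (Ω : Set (Euc n)) (u : Euc n → F) : Prop :=
  IntegrableOn u Ω ∧ var Ω u < ⊤

/-- `u ∈ BV_loc(Ω; F)`. -/
def BVlocOn (Ω : Set (Euc n)) (u : Euc n → F) : Prop :=
  ∀ x ∈ Ω, ∃ r > 0, ball x r ⊆ Ω ∧ IntegrableOn u (ball x r) ∧ var (ball x r) u < ⊤

/-- The total variation of the jump part, `∫_{S_u ∩ Ω} |u⁺ − u⁻| dH^{n-1}`. -/
def jumpVar (Ω : Set (Euc n)) (u : Euc n → F) : ℝ≥0∞ :=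
  ∫⁻ x in jumpSet u ∩ Ω, ENNReal.ofReal (jumpGap u x) ∂(μH[(n : ℝ) - 1])

/-- The total variation of the Cantor part, `|D^c u|(Ω)`; for a `BV` function this equals
`|Du|(Ω) − ∫_Ω |∇u| dx − ∫_{S_u} |u⁺ − u⁻| dH^{n-1}` by the `BV` decomposition. -/
def cantorVar (Ω : Set (Euc n)) (u : Euc n → F) : ℝ≥0∞ :=
  var Ω u - (∫⁻ x in Ω, ENNReal.ofReal (agradNorm u x)) - jumpVar Ω u

/-- Convergence `u_k → u` in `L¹(Ω; F)`. -/
def L1conv (Ω : Set (Euc n)) (uk : ℕ → Euc n → F) (u : Euc n → F) : Prop :=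
  Tendsto (fun k => ∫⁻ x in Ω, (‖uk k x - u x‖₊ : ℝ≥0∞)) atTop (𝓝 0)

/-- Weak-* convergence `u_k ⇀* u` in `BV(Ω; F)`: equivalently (Ambrosio–Fusco–Pallara,
Prop. 3.13), `L¹(Ω)` convergence together with equiboundedness of total variations. -/
def BVWeakStarConv (Ω : Set (Euc n)) (uk : ℕ → Euc n → F) (u : Euc n → F) : Prop :=
  L1conv Ω uk u ∧ (⨆ k, var Ω (uk k)) < ⊤

/-- `G` is the weak (distributional) differential of `u` on `Ω`. -/
def IsWeakDeriv (Ω : Set (Euc n)) (u : Euc n → F) (G : Euc n → Euc n →L[ℝ] F) : Prop :=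
  ∀ (j : Fin n) (ϕ : Euc n → ℝ), ContDiff ℝ (⊤ : ℕ∞) ϕ → HasCompactSupport ϕ →
    tsupport ϕ ⊆ Ω →
    ∫ x in Ω, (fderiv ℝ ϕ x (EuclideanSpace.single j (1 : ℝ))) • u x
      = - ∫ x in Ω, ϕ x • G x (EuclideanSpace.single j (1 : ℝ))

/-- `u ∈ W^{1,p}(Ω; F)`. -/
def MemW1p (p : ℝ≥0∞) (Ω : Set (Euc n)) (u : Euc n → F) : Prop :=
  IntegrableOn u Ω ∧ ∃ G : Euc n → Euc n →L[ℝ] F,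
    AEStronglyMeasurable G (volume.restrict Ω) ∧ IsWeakDeriv Ω u G ∧
    MemLp (fun x => frobNorm (G x)) p (volume.restrict Ω)

end Vec

/-- The perimeter of `E` in `Ω`. -/
def perimeter (Ω E : Set (Euc n)) : ℝ≥0∞ := var Ω (E.indicator (fun _ => (1 : ℝ)))

/-- `E` is a set of finite perimeter in `Ω`. -/
def FinitePerimeterIn (Ω E : Set (Euc n)) : Prop :=
  MeasurableSet E ∧ perimeter Ω E < ⊤

/-- `{E i}` is a Caccioppoli partition of `Ω`. -/
def IsCaccPartition (Ω : Set (Euc n)) (E : ℕ → Set (Euc n)) : Prop :=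
  (∀ i, E i ⊆ Ω) ∧ (∀ i, MeasurableSet (E i)) ∧
  Pairwise (Function.onFun Disjoint E) ∧
  volume (Ω \ ⋃ i, E i) = 0 ∧ (∑' i, perimeter Ω (E i)) < ⊤

/-- The point `e^{iθ}` of `S¹ ⊂ ℝ² ≅ ℂ`. -/
def expS1 (θ : ℝ) : Euc 2 :=
  (EuclideanSpace.equiv (Fin 2) ℝ).symm ![Real.cos θ, Real.sin θ]

/-- `φ` is a lifting of `u` on the set `B`, i.e. `u = e^{iφ}` a.e. on `B`. -/
def IsLiftingOn (B : Set (Euc n)) (u : Euc n → Euc 2) (φ : Euc n → ℝ) : Prop :=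
  ∀ᵐ x ∂(volume.restrict B), u x = expS1 (φ x)

/-- `u ∈ BV(Ω; S¹)`. -/
def MemBVS1 (Ω : Set (Euc n)) (u : Euc n → Euc 2) : Prop :=
  BVOn Ω u ∧ ∀ᵐ x ∂(volume.restrict Ω), ‖u x‖ = 1

/-- `φ ∈ GBV(Ω)`: all truncations `(φ ∧ M) ∨ (−M)` belong to `BV_loc(Ω)`. -/
def GBV (Ω : Set (Euc n)) (φ : Euc n → ℝ) : Prop :=
  Measurable φ ∧ ∀ M > 0, BVlocOn Ω (fun x => max (min (φ x) M) (-M))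

/-- `(φ_k)` converges locally modulo `2π` to `φ_∞` in `Ω`. -/
def ConvLocMod2pi (Ω : Set (Euc n)) (φk : ℕ → Euc n → ℝ) (φinf : Euc n → ℝ) : Prop :=
  ∃ E : ℕ → Set (Euc n), IsCaccPartition Ω E ∧
    ∃ d : ℕ → ℕ → ℤ,
      ∀ i, (∀ᵐ x ∂(volume.restrict (E i)),
              Tendsto (fun k => φk k x - 2 * Real.pi * d i k) atTop (𝓝 (φinf x))) ∧
           (∀ᵐ x ∂(volume.restrict (Ω \ E i)),
              Tendsto (fun k => |φk k x - 2 * Real.pi * d i k|) atTop atTop)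

/-- `Ω` has Lipschitz boundary: near each boundary point, `Ω` is the open epigraph of a
Lipschitz function over some hyperplane. -/
def HasLipschitzBoundary (Ω : Set (Euc n)) : Prop :=
  ∀ x ∈ frontier Ω, ∃ (ν : Euc n) (r : ℝ) (L : ℝ≥0) (ψ : Euc n → ℝ),
    ‖ν‖ = 1 ∧ 0 < r ∧ LipschitzWith L ψ ∧
    ∀ y ∈ ball x r, (y ∈ Ω ↔ ψ (y - ⟪y, ν⟫ • ν) < ⟪y, ν⟫)

/-- Hypothesis (a) on `ψ`. -/
def PsiHyp (ψ : ℝ → ℝ) : Prop :=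
  MonotoneOn ψ (Icc 0 1) ∧ LowerSemicontinuousOn ψ (Icc 0 1) ∧
  (∀ t ∈ Icc (0 : ℝ) 1, ψ t ∈ Icc (0 : ℝ) 1) ∧ ψ 0 = 0 ∧ ψ 1 = 1 ∧
  ∀ t ∈ Icc (0 : ℝ) 1, t ≠ 0 → 0 < ψ t

/-- Hypothesis (b) on `f`. -/
def FHyp (f : ℝ → ℝ) : Prop :=
  ConvexOn ℝ (Ici 0) f ∧ MonotoneOn f (Ici 0) ∧ (∀ t ∈ Ici (0 : ℝ), 0 ≤ f t) ∧
  Tendsto (fun t => f t / t) atTop (𝓝 1)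

/-- Hypothesis (c) on `W`. -/
def WHyp (W : ℝ → ℝ) : Prop :=
  ContinuousOn W (Icc 0 1) ∧ (∀ s ∈ Icc (0 : ℝ) 1, 0 ≤ W s) ∧
  ∀ s ∈ Icc (0 : ℝ) 1, (W s = 0 ↔ s = 1)

/-- `c_W(t) := 2 ∫_t^1 √(W(s)) ds`. -/
def cW (W : ℝ → ℝ) (t : ℝ) : ℝ := 2 * ∫ s in t..(1 : ℝ), Real.sqrt (W s)

/-- `g(z) := min { ψ(t) z + 2 c_W(t) : 0 ≤ t ≤ 1 }`. -/
def gfun (ψ W : ℝ → ℝ) (z : ℝ) : ℝ :=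
  sInf ((fun t => ψ t * z + 2 * cW W t) '' Icc 0 1)

/-- The jump energy `∫_{S_φ ∩ Ω} g(|φ⁺ − φ⁻|) dH^{n-1}`. -/
def jumpEnergy {F : Type*} [NormedAddCommGroup F] [InnerProductSpace ℝ F]
    (g : ℝ → ℝ) (Ω : Set (Euc n)) (φ : Euc n → F) : ℝ≥0∞ :=
  ∫⁻ x in jumpSet φ ∩ Ω, ENNReal.ofReal (g (jumpGap φ x)) ∂(μH[(n : ℝ) - 1])

/-- `m_g[u] := inf { ∫_{S_φ} g(|φ⁺ − φ⁻|) dH^{n-1} : φ ∈ GBV(Ω), e^{iφ} = u a.e. }`. -/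
def mg (g : ℝ → ℝ) (Ω : Set (Euc n)) (u : Euc n → Euc 2) : ℝ≥0∞ :=
  ⨅ (φ : Euc n → ℝ) (_ : GBV Ω φ ∧ IsLiftingOn Ω u φ), jumpEnergy g Ω φ

/-- The Ambrosio–Tortorelli-type energy `F_ε(u,v)`. -/
def ATEnergy (ψ f W : ℝ → ℝ) (ε : ℝ) (Ω : Set (Euc n)) (u : Euc n → Euc 2)
    (v : Euc n → ℝ) : ℝ≥0∞ :=
  ∫⁻ x in Ω, (ENNReal.ofReal (ψ (v x) * f (agradNorm u x)) +
    ENNReal.ofReal (ε * (agradNorm v x) ^ 2) + ENNReal.ofReal (W (v x) / ε))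

-- marker
/-- `(u,v) ∈ D̂_{S¹} = W^{1,1}(Ω;S¹) × W^{1,2}(Ω)`, `0 ≤ v ≤ 1`. -/
def InDomainHat (Ω : Set (Euc n)) (u : Euc n → Euc 2) (v : Euc n → ℝ) : Prop :=
  MemW1p 1 Ω u ∧ (∀ᵐ x ∂(volume.restrict Ω), ‖u x‖ = 1) ∧
  MemW1p 2 Ω v ∧ (∀ᵐ x ∂(volume.restrict Ω), v x ∈ Icc (0 : ℝ) 1)

/-- `(u,v) ∈ D_{S¹} = W^{1,2}(Ω;S¹) × W^{1,2}(Ω)`, `0 ≤ v ≤ 1`. -/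
def InDomain (Ω : Set (Euc n)) (u : Euc n → Euc 2) (v : Euc n → ℝ) : Prop :=
  MemW1p 2 Ω u ∧ (∀ᵐ x ∂(volume.restrict Ω), ‖u x‖ = 1) ∧
  MemW1p 2 Ω v ∧ (∀ᵐ x ∂(volume.restrict Ω), v x ∈ Icc (0 : ℝ) 1)

open Classical in
/-- The functional `F̂_ε^{S¹}`. -/
def FhatS1 (ψ f W : ℝ → ℝ) (ε : ℝ) (Ω : Set (Euc n)) (u : Euc n → Euc 2)
    (v : Euc n → ℝ) : ℝ≥0∞ :=
  if InDomainHat Ω u v then ATEnergy ψ f W ε Ω u v else ⊤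

open Classical in
/-- The functional `F_ε^{S¹}`. -/
def FS1 (ψ f W : ℝ → ℝ) (ε : ℝ) (Ω : Set (Euc n)) (u : Euc n → Euc 2)
    (v : Euc n → ℝ) : ℝ≥0∞ :=
  if InDomain Ω u v then ATEnergy ψ f W ε Ω u v else ⊤

open Classical in
/-- The local limit functional `F^{S¹}`. -/
def FlimS1 (f g : ℝ → ℝ) (Ω : Set (Euc n)) (u : Euc n → Euc 2) (v : Euc n → ℝ) : ℝ≥0∞ :=
  if MemBVS1 Ω u ∧ (∀ᵐ x ∂(volume.restrict Ω), v x = 1) then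
    (∫⁻ x in Ω, ENNReal.ofReal (f (agradNorm u x))) + cantorVar Ω u + jumpEnergy g Ω u
  else ⊤

open Classical in
/-- The nonlocal limit functional `F_lift`. -/
def Flift (f g : ℝ → ℝ) (Ω : Set (Euc n)) (u : Euc n → Euc 2) (v : Euc n → ℝ) : ℝ≥0∞ :=
  if MemBVS1 Ω u ∧ (∀ᵐ x ∂(volume.restrict Ω), v x = 1) then
    (∫⁻ x in Ω, ENNReal.ofReal (f (agradNorm u x))) + cantorVar Ω u + mg g Ω u
  else ⊤

/-- Membership in `L¹(Ω; S¹)`. -/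
def MemL1S1 (Ω : Set (Euc n)) (u : Euc n → Euc 2) : Prop :=
  IntegrableOn u Ω ∧ ∀ᵐ x ∂(volume.restrict Ω), ‖u x‖ = 1

/-- Γ-convergence, as `ε → 0⁺`, in the `L¹(Ω;S¹) × L¹(Ω)` topology: the liminf
inequality plus the existence of a recovery sequence, along every sequence `ε_k → 0⁺`. -/
def GammaConvL1 (Ω : Set (Euc n)) (Fε : ℝ → (Euc n → Euc 2) → (Euc n → ℝ) → ℝ≥0∞)
    (Flim : (Euc n → Euc 2) → (Euc n → ℝ) → ℝ≥0∞) : Prop :=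
  ∀ ε : ℕ → ℝ, (∀ k, 0 < ε k) → Tendsto ε atTop (𝓝 0) →
    (∀ (u : Euc n → Euc 2) (v : Euc n → ℝ) (uk : ℕ → Euc n → Euc 2) (vk : ℕ → Euc n → ℝ),
      MemL1S1 Ω u → (∀ k, MemL1S1 Ω (uk k)) →
      IntegrableOn v Ω → (∀ k, IntegrableOn (vk k) Ω) →
      L1conv Ω uk u → L1conv Ω vk v →
      Flim u v ≤ Filter.liminf (fun k => Fε (ε k) (uk k) (vk k)) atTop) ∧
    (∀ (u : Euc n → Euc 2) (v : Euc n → ℝ), MemL1S1 Ω u → IntegrableOn v Ω →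
      ∃ (uk : ℕ → Euc n → Euc 2) (vk : ℕ → Euc n → ℝ),
        (∀ k, MemL1S1 Ω (uk k)) ∧ (∀ k, IntegrableOn (vk k) Ω) ∧
        L1conv Ω uk u ∧ L1conv Ω vk v ∧
        Filter.limsup (fun k => Fε (ε k) (uk k) (vk k)) atTop ≤ Flim u v)

lemma sqrtW_intble {W : ℝ → ℝ} (hW : WHyp W) {a b : ℝ} (ha : a ∈ Icc (0:ℝ) 1)
    (hb : b ∈ Icc (0:ℝ) 1) :
    IntervalIntegrable (fun s => Real.sqrt (W s)) volume a b := by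
  apply ContinuousOn.intervalIntegrable
  apply (Real.continuous_sqrt.comp_continuousOn hW.1).mono
  rw [← uIcc_of_le (zero_le_one (α := ℝ))]
  exact uIcc_subset_uIcc (by rw [uIcc_of_le zero_le_one]; exact ha)
    (by rw [uIcc_of_le zero_le_one]; exact hb)

lemma cW_nonneg {W : ℝ → ℝ} (hW : WHyp W) {t : ℝ} (ht : t ∈ Icc (0:ℝ) 1) :
    0 ≤ cW W t := by
  have : 0 ≤ ∫ s in t..(1:ℝ), Real.sqrt (W s) :=
    intervalIntegral.integral_nonneg ht.2 (fun s _ => Real.sqrt_nonneg _)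
  unfold cW; linarith

lemma cW_anti {W : ℝ → ℝ} (hW : WHyp W) {a b : ℝ} (ha : a ∈ Icc (0:ℝ) 1)
    (hb : b ∈ Icc (0:ℝ) 1) (hab : a ≤ b) : cW W b ≤ cW W a := by
  have hsplit := intervalIntegral.integral_add_adjacent_intervals
    (sqrtW_intble hW ha hb) (sqrtW_intble hW hb (right_mem_Icc.2 zero_le_one))
  have h0 : 0 ≤ ∫ s in a..b, Real.sqrt (W s) :=
    intervalIntegral.integral_nonneg hab (fun s _ => Real.sqrt_nonneg _)
  unfold cW; linarith

lemma cW_pos {W : ℝ → ℝ} (hW : WHyp W) {t : ℝ} (ht : t ∈ Ico (0:ℝ) 1) :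
    0 < cW W t := by
  have hpos : 0 < ∫ s in t..(1:ℝ), Real.sqrt (W s) := by
    apply intervalIntegral.intervalIntegral_pos_of_pos_on
      (sqrtW_intble hW ⟨ht.1, ht.2.le⟩ (right_mem_Icc.2 zero_le_one))
    · intro s hs
      have hsI : s ∈ Icc (0:ℝ) 1 := ⟨ht.1.trans hs.1.le, hs.2.le⟩
      have hWpos : 0 < W s := by
        rcases lt_or_eq_of_le ((hW.2.1) s hsI) with h | h
        · exact h
        · exact absurd ((hW.2.2 s hsI).mp h.symm) (ne_of_lt hs.2)
      exact Real.sqrt_pos.2 hWpos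
    · exact ht.2
  unfold cW; linarith

lemma gfun_le_id (ψ W : ℝ → ℝ) (hψ : PsiHyp ψ) (hW : WHyp W) :
    ∀ z ∈ Set.Ici (0 : ℝ), gfun ψ W z ≤ z := by
  intro z hz
  have hz0 : (0:ℝ) ≤ z := hz
  have hmem : z ∈ (fun t => ψ t * z + 2 * cW W t) '' Icc 0 1 := by
    refine ⟨1, right_mem_Icc.2 zero_le_one, ?_⟩
    have hcW1 : cW W 1 = 0 := by simp [cW]
    show ψ 1 * z + 2 * cW W 1 = z
    rw [hψ.2.2.2.2.1, hcW1]; ring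
  apply csInf_le _ hmem
  refine ⟨0, ?_⟩
  rintro _ ⟨t, ht, rfl⟩
  dsimp only
  have h1 := (hψ.2.2.1 t ht).1
  have h2 := cW_nonneg hW ht
  nlinarith

/-- `g(z) ≤ z` for all `z ≥ 0`, and `lim_{z→0⁺} g(z)/z = 1`. -/
theorem g_le_id_and_slope_one (ψ W : ℝ → ℝ) (hψ : PsiHyp ψ) (hW : WHyp W) :
    (∀ z ∈ Set.Ici (0 : ℝ), gfun ψ W z ≤ z) ∧
    Tendsto (fun z => gfun ψ W z / z) (𝓝[>] 0) (𝓝 1) := by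
  refine ⟨gfun_le_id ψ W hψ hW, ?_⟩
  rw [Metric.tendsto_nhds]
  intro ε hε
  set ε' : ℝ := min ε 1 / 2 with hε'def
  have hε'pos : 0 < ε' := by positivity
  have hε'lt : ε' < ε := by
    have : min ε 1 ≤ ε := min_le_left _ _
    simp only [hε'def]; linarith
  have hε'le1 : ε' ≤ 1 := by
    have : min ε 1 ≤ 1 := min_le_right _ _
    simp only [hε'def]; linarith
  -- find t₀ ∈ [0,1) with ψ t₀ > 1 - ε'
  have hlsc := hψ.2.1 1 (right_mem_Icc.2 zero_le_one) (1 - ε')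
    (by show 1 - ε' < ψ 1; rw [hψ.2.2.2.2.1]; linarith)
  have hne : (𝓝[Ico (0:ℝ) 1] 1).NeBot := by
    rw [← mem_closure_iff_nhdsWithin_neBot, closure_Ico (by norm_num : (0:ℝ) ≠ 1)]
    exact right_mem_Icc.2 zero_le_one
  have h2 : ∀ᶠ t in 𝓝[Ico (0:ℝ) 1] 1, 1 - ε' < ψ t :=
    (nhdsWithin_mono 1 Ico_subset_Icc_self) hlsc
  obtain ⟨t₀, hψt₀, ht₀⟩ := (h2.and eventually_mem_nhdsWithin).exists
  have ht₀Icc : t₀ ∈ Icc (0:ℝ) 1 := ⟨ht₀.1, ht₀.2.le⟩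
  set δ : ℝ := 2 * cW W t₀ with hδdef
  have hδpos : 0 < δ := by
    have := cW_pos hW ht₀
    simp only [hδdef]; linarith
  filter_upwards [Ioo_mem_nhdsGT_of_mem (left_mem_Ico.2 hδpos)] with z hz
  have hz0 : 0 < z := hz.1
  have hub : gfun ψ W z ≤ z := gfun_le_id ψ W hψ hW z (le_of_lt hz0)
  have hlb : (1 - ε') * z ≤ gfun ψ W z := by
    apply le_csInf (((nonempty_Icc.2 zero_le_one).image _))
    rintro _ ⟨t, ht, rfl⟩
    dsimp only
    have hψnn := (hψ.2.2.1 t ht).1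
    have hcWnn := cW_nonneg hW ht
    rcases le_or_gt t t₀ with hle | hlt
    · have hcW : cW W t₀ ≤ cW W t := cW_anti hW ht ht₀Icc hle
      nlinarith [hz.2]
    · have hψt : 1 - ε' < ψ t := lt_of_lt_of_le hψt₀ (hψ.1 ht₀Icc ht hlt.le)
      nlinarith
  have h1 : gfun ψ W z / z ≤ 1 := (div_le_one hz0).2 hub
  have h2' : 1 - ε' ≤ gfun ψ W z / z := (le_div_iff₀ hz0).2 (by linarith)
  rw [Real.dist_eq]
  have : |gfun ψ W z / z - 1| ≤ ε' := abs_le.2 ⟨by linarith, by linarith⟩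
  linarith

end
end

section
/- Let g(z) := min{ψ(t)z + 2c_W(t) : 0 ≤ t ≤ 1}. Then for every T > 0 there exists a constant c_T > 0 such that z ≤ c_T g(z) for all z ∈ [0,T]. -/
open MeasureTheory Metric Filter Set Topology
open scoped ENNReal NNReal RealInnerProductSpace

noncomputable section

variable {n : ℕ}

/-- For every `T > 0` there is `c_T > 0` with `z ≤ c_T g(z)` for all `z ∈ [0,T]`. -/
theorem g_reverse_bound (ψ W : ℝ → ℝ) (hψ : PsiHyp ψ) (hW : WHyp W) :
    ∀ T > (0 : ℝ), ∃ c > (0 : ℝ), ∀ z ∈ Set.Icc (0 : ℝ) T, z ≤ c * gfun ψ W z := by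
  intro T hT
  obtain ⟨hmono, _, hrange, hψ0, hψ1, hψpos⟩ := hψ
  obtain ⟨hWc, hWnn, hWz⟩ := hW
  have hsqrtc : ContinuousOn (fun s => Real.sqrt (W s)) (Icc 0 1) := hWc.sqrt
  have hint : ∀ t ∈ Icc (0:ℝ) 1, IntervalIntegrable (fun s => Real.sqrt (W s)) volume t 1 := by
    intro t ht
    apply ContinuousOn.intervalIntegrable
    apply hsqrtc.mono
    rw [uIcc_of_le ht.2]
    exact Icc_subset_Icc ht.1 le_rfl
  set a := ψ (1/2) with ha
  have ha_pos : 0 < a := hψpos (1/2) ⟨by norm_num, by norm_num⟩ (by norm_num)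
  set b := cW W (1/2) with hb
  have hb_pos : 0 < b := by
    rw [hb, cW]
    have h0 : 0 < ∫ s in (1/2:ℝ)..1, Real.sqrt (W s) := by
      apply intervalIntegral.intervalIntegral_pos_of_pos_on
        (hint (1/2) ⟨by norm_num, by norm_num⟩)
      · intro s hs
        apply Real.sqrt_pos.mpr
        have hsm : s ∈ Icc (0:ℝ) 1 := ⟨by linarith [hs.1], le_of_lt hs.2⟩
        rcases lt_or_eq_of_le (hWnn s hsm) with h | h
        · exact h
        · exact absurd ((hWz s hsm).mp h.symm) (ne_of_lt hs.2)
      · norm_num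
    linarith
  have hcW_nn : ∀ t ∈ Icc (0:ℝ) 1, 0 ≤ cW W t := by
    intro t ht
    rw [cW]
    have := intervalIntegral.integral_nonneg (μ := volume) ht.2
      (fun s _ => Real.sqrt_nonneg (W s))
    linarith
  have hcW_mono : ∀ t ∈ Icc (0:ℝ) 1, t ≤ 1/2 → b ≤ cW W t := by
    intro t ht htle
    rw [hb, cW, cW]
    have := intervalIntegral.integral_mono_interval (μ := volume)
      (f := fun s => Real.sqrt (W s)) htle (by norm_num) le_rfl
      (Filter.Eventually.of_forall fun s => Real.sqrt_nonneg (W s)) (hint t ht)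
    linarith
  refine ⟨max (1/a) (T/b), lt_max_of_lt_left (by positivity), ?_⟩
  intro z hz
  have hm : min (a * z) (2 * b) ≤ gfun ψ W z := by
    rw [gfun]
    apply le_csInf ((nonempty_Icc.mpr zero_le_one).image _)
    rintro y ⟨t, ht, rfl⟩
    rcases le_or_gt (1/2) t with h | h
    · have h1 : a ≤ ψ t := hmono ⟨by norm_num, by norm_num⟩ ht h
      have h2 : 0 ≤ cW W t := hcW_nn t ht
      calc min (a*z) (2*b) ≤ a*z := min_le_left _ _
        _ ≤ ψ t * z + 2 * cW W t := by nlinarith [hz.1]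
    · have h2 : b ≤ cW W t := hcW_mono t ht h.le
      have h1 : 0 ≤ ψ t := (hrange t ht).1
      calc min (a*z) (2*b) ≤ 2*b := min_le_right _ _
        _ ≤ ψ t * z + 2 * cW W t := by nlinarith [hz.1]
  set c := max (1/a) (T/b) with hc
  have hc1 : 1/a ≤ c := le_max_left _ _
  have hc2 : T/b ≤ c := le_max_right _ _
  have hc0 : 0 ≤ c := le_trans (by positivity) hc1
  have hkey : z ≤ c * min (a*z) (2*b) := by
    rcases min_cases (a*z) (2*b) with ⟨he, _⟩ | ⟨he, _⟩
    · rw [he]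
      have h1 : z = (1/a) * (a*z) := by field_simp
      have h2 : (1/a) * (a*z) ≤ c * (a*z) :=
        mul_le_mul_of_nonneg_right hc1 (by nlinarith [hz.1])
      linarith
    · rw [he]
      have h3 : (T/b) * b ≤ c * b := mul_le_mul_of_nonneg_right hc2 hb_pos.le
      have h4 : (T/b) * b = T := by field_simp
      nlinarith [hz.2, mul_nonneg hc0 hb_pos.le]
  calc z ≤ c * min (a*z) (2*b) := hkey
    _ ≤ c * gfun ψ W z := mul_le_mul_of_nonneg_left hm hc0

end
end
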